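/- arXiv:1010.0361 — 18 statements merged into one kernel-verified Lean document; each statement's English description precedes it below -/
import Mathlib

section
/- Let u : ℤ → ℝ → ℝ be such that each function u i is differentiable and u satisfies the semi-discrete sine-Gordon equation: for all i ∈ ℤ and x ∈ ℝ, (u (i+1))'(x) − sin(u (i+1) x) = (u i)'(x) + sin(u i x). Define v : ℤ → ℝ → ℝ by v i x = ((u i)'(x) − sin(u i x))/2. Then for every i ∈ ℤ the function x ↦ v (i+1) x − v i x is differentiable, and at every point x where cos(u i x) ≥ 0 its derivative satisfies (v (i+1) − v i)'(x) = (v (i+1) x + v i x) · √(1 − (v (i+1) x − v i x)²). -/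
/-- The substitution v = (uₓ − sin u)/2 maps solutions of the semi-discrete
sine-Gordon equation into solutions of the semi-discrete complex sine-Gordon
equation (with `+` sign where cos u ≥ 0). -/
theorem stmt_0 (u : ℤ → ℝ → ℝ)
    (hdiff : ∀ i : ℤ, Differentiable ℝ (u i))
    (hsg : ∀ (i : ℤ) (x : ℝ),
      deriv (u (i + 1)) x - Real.sin (u (i + 1) x)
        = deriv (u i) x + Real.sin (u i x))
    (v : ℤ → ℝ → ℝ)
    (hv : ∀ (i : ℤ) (x : ℝ), v i x = (deriv (u i) x - Real.sin (u i x)) / 2) :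
    ∀ i : ℤ, Differentiable ℝ (fun x => v (i + 1) x - v i x) ∧
      ∀ x : ℝ, 0 ≤ Real.cos (u i x) →
        deriv (fun y => v (i + 1) y - v i y) x
          = (v (i + 1) x + v i x) * Real.sqrt (1 - (v (i + 1) x - v i x) ^ 2) := by
  intro i
  have hdiffm : ∀ x : ℝ, v (i + 1) x - v i x = Real.sin (u i x) := by
    intro x
    rw [hv, hv, hsg i x]
    ring
  have hsum : ∀ x : ℝ, v (i + 1) x + v i x = deriv (u i) x := by
    intro x
    rw [hv, hv, hsg i x]
    ring
  have hfun : (fun x => v (i + 1) x - v i x) = fun x => Real.sin (u i x) := by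
    funext x; exact hdiffm x
  rw [hfun]
  constructor
  · exact Real.differentiable_sin.comp (hdiff i)
  · intro x hcos
    have hd : deriv (fun y => Real.sin (u i y)) x
        = Real.cos (u i x) * deriv (u i) x := by
      exact (Real.hasDerivAt_sin (u i x)).comp x ((hdiff i x).hasDerivAt) |>.deriv
    rw [hd, hdiffm, hsum]
    have hsqrt : Real.sqrt (1 - Real.sin (u i x) ^ 2) = Real.cos (u i x) := by
      rw [show (1 : ℝ) - Real.sin (u i x) ^ 2 = Real.cos (u i x) ^ 2 by
        have := Real.sin_sq_add_cos_sq (u i x); linarith]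
      exact Real.sqrt_sq hcos
    rw [hsqrt]
    ring
end

section
/- Let v : ℤ → ℝ → ℝ be such that each v i is differentiable, |v (i+1) x − v i x| < 1 for all i ∈ ℤ and x ∈ ℝ, and for all i, x one has (v (i+1) − v i)'(x) = (v (i+1) x + v i x) · √(1 − (v (i+1) x − v i x)²). Define u : ℤ → ℝ → ℝ by u i x = arcsin(v (i+1) x − v i x). Then u satisfies the semi-discrete sine-Gordon equation: for all i ∈ ℤ and x ∈ ℝ, (u (i+1))'(x) − sin(u (i+1) x) = (u i)'(x) + sin(u i x). -/
/-- The transformation u = arcsin(v₁ − v) maps solutions of the semi-discrete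
complex sine-Gordon equation back into solutions of the semi-discrete
sine-Gordon equation. -/
theorem stmt_1 (v : ℤ → ℝ → ℝ)
    (hdiff : ∀ i : ℤ, Differentiable ℝ (v i))
    (hbound : ∀ (i : ℤ) (x : ℝ), |v (i + 1) x - v i x| < 1)
    (heq : ∀ (i : ℤ) (x : ℝ),
      deriv (fun y => v (i + 1) y - v i y) x
        = (v (i + 1) x + v i x) * Real.sqrt (1 - (v (i + 1) x - v i x) ^ 2))
    (u : ℤ → ℝ → ℝ)
    (hu : ∀ (i : ℤ) (x : ℝ), u i x = Real.arcsin (v (i + 1) x - v i x)) :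
    ∀ (i : ℤ) (x : ℝ),
      deriv (u (i + 1)) x - Real.sin (u (i + 1) x)
        = deriv (u i) x + Real.sin (u i x) := by
  have key : ∀ (i : ℤ) (x : ℝ), deriv (u i) x = v (i + 1) x + v i x := by
    intro i x
    set w : ℝ → ℝ := fun y => v (i + 1) y - v i y with hw
    have hb := abs_lt.1 (hbound i x)
    have hsq : (w x) ^ 2 < 1 := by
      have := (sq_lt_one_iff_abs_lt_one (a := v (i + 1) x - v i x)).2 (hbound i x)
      simpa [hw] using this
    have hpos : 0 < Real.sqrt (1 - (w x) ^ 2) := Real.sqrt_pos.2 (by linarith)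
    have hwd : DifferentiableAt ℝ w x := ((hdiff (i + 1)).sub (hdiff i)).differentiableAt
    have hwd' : HasDerivAt w (deriv w x) x := hwd.hasDerivAt
    have harc : HasDerivAt Real.arcsin (1 / Real.sqrt (1 - (w x) ^ 2)) (w x) :=
      Real.hasDerivAt_arcsin (by nlinarith [hb.1]) (by nlinarith [hb.2])
    have hcomp : HasDerivAt (fun y => Real.arcsin (w y))
        (1 / Real.sqrt (1 - (w x) ^ 2) * deriv w x) x := harc.comp x hwd'
    have huw : u i = fun y => Real.arcsin (w y) := by
      funext y; exact hu i y
    rw [huw, hcomp.deriv, heq i x]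
    field_simp
    simp only [hw]; ring
  have ksin : ∀ (i : ℤ) (x : ℝ), Real.sin (u i x) = v (i + 1) x - v i x := by
    intro i x
    have hb := abs_lt.1 (hbound i x)
    rw [hu i x, Real.sin_arcsin (by linarith) (by linarith)]
  intro i x
  rw [key, key, ksin, ksin]
  ring
end

section
/- Let φ, ψ, p, q : ℝ × ℝ → ℝ satisfy, for all y, z ∈ ℝ, p(φ(y,z), ψ(y,z)) = y and q(φ(y,z), ψ(y,z)) = z. Let u : ℤ × ℤ → ℝ satisfy, for all (i,j) ∈ ℤ², φ(u(i,j+1), u(i+1,j+1)) = ψ(u(i,j), u(i+1,j)). Define v(i,j) = φ(u(i,j), u(i+1,j)). Then for all (i,j) ∈ ℤ², p(v(i+1,j), v(i+1,j+1)) = q(v(i,j), v(i,j+1)). -/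
/-- General scheme of non-point invertible transformations for quad-graph
equations: v = φ(u, u_{1,0}) maps solutions of φ(u_{0,1}, u_{1,1}) = ψ(u, u_{1,0})
into solutions of p(v_{1,0}, v_{1,1}) = q(v, v_{0,1}). -/
theorem stmt_3 (φ ψ p q : ℝ × ℝ → ℝ)
    (hp : ∀ y z : ℝ, p (φ (y, z), ψ (y, z)) = y)
    (hq : ∀ y z : ℝ, q (φ (y, z), ψ (y, z)) = z)
    (u : ℤ × ℤ → ℝ)
    (heq : ∀ i j : ℤ, φ (u (i, j + 1), u (i + 1, j + 1)) = ψ (u (i, j), u (i + 1, j)))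
    (v : ℤ × ℤ → ℝ)
    (hv : ∀ i j : ℤ, v (i, j) = φ (u (i, j), u (i + 1, j))) :
    ∀ i j : ℤ, p (v (i + 1, j), v (i + 1, j + 1)) = q (v (i, j), v (i, j + 1)) := by
  intro i j
  rw [hv, hv, hv, hv, heq i j, hq]
  have h2 : (i + 1 + 1 : ℤ) = i + 2 := by ring
  have h3 := heq (i+1) j
  rw [h2] at h3
  rw [h2, h3, hp]
end

section
/- Let φ, ψ, p, q : ℝ × ℝ → ℝ satisfy, for all y, z ∈ ℝ, the identities p(φ(y,z), ψ(y,z)) = y, q(φ(y,z), ψ(y,z)) = z, φ(p(y,z), q(y,z)) = y and ψ(p(y,z), q(y,z)) = z. Let v : ℤ × ℤ → ℝ satisfy, for all (i,j) ∈ ℤ², p(v(i+1,j), v(i+1,j+1)) = q(v(i,j), v(i,j+1)). Define u(i,j) = p(v(i,j), v(i,j+1)). Then for all (i,j) ∈ ℤ², φ(u(i,j+1), u(i+1,j+1)) = ψ(u(i,j), u(i+1,j)). -/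
/-- Inverse direction of the scheme: u = p(v, v_{0,1}) maps solutions of
p(v_{1,0}, v_{1,1}) = q(v, v_{0,1}) back into solutions of
φ(u_{0,1}, u_{1,1}) = ψ(u, u_{1,0}). -/
theorem stmt_4 (φ ψ p q : ℝ × ℝ → ℝ)
    (hp : ∀ y z : ℝ, p (φ (y, z), ψ (y, z)) = y)
    (hq : ∀ y z : ℝ, q (φ (y, z), ψ (y, z)) = z)
    (hφ : ∀ y z : ℝ, φ (p (y, z), q (y, z)) = y)
    (hψ : ∀ y z : ℝ, ψ (p (y, z), q (y, z)) = z)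
    (v : ℤ × ℤ → ℝ)
    (heq : ∀ i j : ℤ, p (v (i + 1, j), v (i + 1, j + 1)) = q (v (i, j), v (i, j + 1)))
    (u : ℤ × ℤ → ℝ)
    (hu : ∀ i j : ℤ, u (i, j) = p (v (i, j), v (i, j + 1))) :
    ∀ i j : ℤ, φ (u (i, j + 1), u (i + 1, j + 1)) = ψ (u (i, j), u (i + 1, j)) := by
  intro i j
  rw [hu, hu, hu, hu, heq i (j + 1), heq i j, hφ, hψ]
end

section
/- Let v : ℤ × ℤ → ℝ satisfy v(i,j)·v(i+1,j) ≠ 1 for all (i,j) and the equation v(i+1,j+1) · ( v(i,j)·(v(i,j+1) − v(i+1,j)) + v(i,j+1) + 1 ) = v(i,j) · (v(i+1,j) + 1) for all (i,j) ∈ ℤ². Define u(i,j) = −2(v(i+1,j) + 1)/(v(i,j)·v(i+1,j) − 1) − 1. Then u satisfies, for all (i,j) ∈ ℤ², the equation (u(i+1,j+1) − 1)(u(i,j+1) + 1) = (u(i+1,j) + 1)(u(i,j) − 1). -/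
/-- The inverse transformation u = −2(v_{1,0} + 1)/(v v_{1,0} − 1) − 1 maps
solutions of v_{1,1}(v(v_{0,1} − v_{1,0}) + v_{0,1} + 1) = v(v_{1,0} + 1) back
into solutions of the Nijhoff–Capel equation. -/
theorem stmt_6 (v : ℤ × ℤ → ℝ)
    (hne : ∀ i j : ℤ, v (i, j) * v (i + 1, j) ≠ 1)
    (heq : ∀ i j : ℤ,
      v (i + 1, j + 1) * (v (i, j) * (v (i, j + 1) - v (i + 1, j)) + v (i, j + 1) + 1)
        = v (i, j) * (v (i + 1, j) + 1))
    (u : ℤ × ℤ → ℝ)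
    (hu : ∀ i j : ℤ,
      u (i, j) = -2 * (v (i + 1, j) + 1) / (v (i, j) * v (i + 1, j) - 1) - 1) :
    ∀ i j : ℤ,
      (u (i + 1, j + 1) - 1) * (u (i, j + 1) + 1)
        = (u (i + 1, j) + 1) * (u (i, j) - 1) := by
  intro i j
  set a := v (i, j) with ha
  set b := v (i + 1, j) with hb
  set c := v (i, j + 1) with hc
  set d := v (i + 1, j + 1) with hd
  set e := v (i + 1 + 1, j) with he
  set f := v (i + 1 + 1, j + 1) with hf
  have h1 : a * b - 1 ≠ 0 := sub_ne_zero.mpr (hne i j)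
  have h2 : c * d - 1 ≠ 0 := sub_ne_zero.mpr (hne i (j + 1))
  have h3 : b * e - 1 ≠ 0 := sub_ne_zero.mpr (hne (i + 1) j)
  have h4 : d * f - 1 ≠ 0 := sub_ne_zero.mpr (hne (i + 1) (j + 1))
  have e1 : d * (a * (c - b) + c + 1) = a * (b + 1) := heq i j
  have e2 : f * (b * (d - e) + d + 1) = b * (e + 1) := heq (i + 1) j
  rw [hu (i + 1) (j + 1), hu i (j + 1), hu (i + 1) j, hu i j]
  simp only [← ha, ← hb, ← hc, ← hd, ← he, ← hf]
  have h1' : b * a - 1 ≠ 0 := by rwa [mul_comm]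
  have h2' : d * c - 1 ≠ 0 := by rwa [mul_comm]
  have h3' : e * b - 1 ≠ 0 := by rwa [mul_comm]
  have h4' : f * d - 1 ≠ 0 := by rwa [mul_comm]
  field_simp
  linear_combination (4 * b * (e + 1) * (1 - d * f)) * e1 + (4 * (d + 1) * (1 - a * b)) * e2
end

section
/- Let v : ℤ × ℤ → ℝ satisfy v(i,j) ≠ −1 for all (i,j) and the equation v(i+1,j+1) · ( v(i,j)·(v(i,j+1) − v(i+1,j)) + v(i,j+1) + 1 ) = v(i,j) · (v(i+1,j) + 1) for all (i,j) ∈ ℤ². Define η(i,j) = v(i,j) · ( 1/(v(i,j+1) + 1) − 1/(v(i,j−1) + 1) ). Then η satisfies the linearization of the equation at v: for all (i,j) ∈ ℤ², η(i+1,j+1)·( v(i,j)·(v(i,j+1) − v(i+1,j)) + v(i,j+1) + 1 ) + v(i+1,j+1)·( η(i,j)·(v(i,j+1) − v(i+1,j)) + v(i,j)·(η(i,j+1) − η(i+1,j)) + η(i,j+1) ) = η(i,j)·(v(i+1,j) + 1) + v(i,j)·η(i+1,j). -/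
set_option maxHeartbeats 1000000 in
/-- η = v(1/(v_{0,1} + 1) − 1/(v_{0,−1} + 1)) is a symmetry of the equation
v_{1,1}(v(v_{0,1} − v_{1,0}) + v_{0,1} + 1) = v(v_{1,0} + 1): it satisfies the
linearization of the equation at the solution v. -/
theorem stmt_7 (v : ℤ × ℤ → ℝ)
    (hne : ∀ i j : ℤ, v (i, j) ≠ -1)
    (heq : ∀ i j : ℤ,
      v (i + 1, j + 1) * (v (i, j) * (v (i, j + 1) - v (i + 1, j)) + v (i, j + 1) + 1)
        = v (i, j) * (v (i + 1, j) + 1))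
    (η : ℤ × ℤ → ℝ)
    (hη : ∀ i j : ℤ,
      η (i, j) = v (i, j) * (1 / (v (i, j + 1) + 1) - 1 / (v (i, j - 1) + 1))) :
    ∀ i j : ℤ,
      η (i + 1, j + 1) * (v (i, j) * (v (i, j + 1) - v (i + 1, j)) + v (i, j + 1) + 1)
        + v (i + 1, j + 1) * (η (i, j) * (v (i, j + 1) - v (i + 1, j))
            + v (i, j) * (η (i, j + 1) - η (i + 1, j)) + η (i, j + 1))
        = η (i, j) * (v (i + 1, j) + 1) + v (i, j) * η (i + 1, j) := by
  intro i j
  have key : ∀ x y : ℤ, v (x, y) + 1 ≠ 0 := by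
    intro x y h
    exact hne x y (by linarith)
  -- shifted copies of the equation
  have h0 := heq i (j - 1)
  rw [show j - 1 + 1 = j from by ring] at h0
  have h1 := heq i j
  have h2 := heq i (j + 1)
  rw [show j + 1 + 1 = j + 2 from by ring] at h2
  -- product form of the equation
  have hA0 : (v (i + 1, j) + 1) * (v (i, j - 1) * (v (i, j) - v (i + 1, j - 1)) + v (i, j) + 1)
      = (v (i, j - 1) + 1) * (v (i, j) + 1) := by linear_combination h0
  have hA1 : (v (i + 1, j + 1) + 1) * (v (i, j) * (v (i, j + 1) - v (i + 1, j)) + v (i, j + 1) + 1)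
      = (v (i, j) + 1) * (v (i, j + 1) + 1) := by linear_combination h1
  have hA2 : (v (i + 1, j + 2) + 1) * (v (i, j + 1) * (v (i, j + 2) - v (i + 1, j + 1)) + v (i, j + 2) + 1)
      = (v (i, j + 1) + 1) * (v (i, j + 2) + 1) := by linear_combination h2
  have hD : v (i, j) * (v (i, j + 1) - v (i + 1, j)) + v (i, j + 1) + 1 ≠ 0 := by
    intro h
    rw [h, mul_zero] at hA1
    exact mul_ne_zero (key i j) (key i (j + 1)) hA1.symm
  have hD2 : v (i, j + 1) * (v (i, j + 2) - v (i + 1, j + 1)) + v (i, j + 2) + 1 ≠ 0 := by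
    intro h
    rw [h, mul_zero] at hA2
    exact mul_ne_zero (key i (j + 1)) (key i (j + 2)) hA2.symm
  -- closed forms for the reciprocals
  have hq1 : v (i + 1, j) / (v (i + 1, j + 1) + 1)
      = v (i + 1, j) * (v (i, j) * (v (i, j + 1) - v (i + 1, j)) + v (i, j + 1) + 1)
        / ((v (i, j) + 1) * (v (i, j + 1) + 1)) := by
    rw [div_eq_div_iff (key (i + 1) (j + 1)) (mul_ne_zero (key i j) (key i (j + 1)))]
    linear_combination (-v (i + 1, j)) * hA1
  have hs1 : v (i + 1, j) / (v (i + 1, j - 1) + 1)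
      = v (i, j - 1) * (v (i + 1, j) + 1) / ((v (i, j - 1) + 1) * (v (i, j) + 1)) := by
    rw [div_eq_div_iff (key (i + 1) (j - 1)) (mul_ne_zero (key i (j - 1)) (key i j))]
    linear_combination (v (i + 1, j) + 1) * h0 - v (i + 1, j) * hA0
  have hq2 : v (i + 1, j + 1) / (v (i + 1, j) + 1)
      = v (i, j) * (v (i + 1, j + 1) + 1) / ((v (i, j) + 1) * (v (i, j + 1) + 1)) := by
    rw [div_eq_div_iff (key (i + 1) j) (mul_ne_zero (key i j) (key i (j + 1)))]
    linear_combination (v (i + 1, j + 1) + 1) * h1 - v (i + 1, j + 1) * hA1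
  have hr1 : v (i + 1, j + 1) / (v (i + 1, j + 2) + 1)
      = v (i + 1, j + 1) * (v (i, j + 1) * (v (i, j + 2) - v (i + 1, j + 1)) + v (i, j + 2) + 1)
        / ((v (i, j + 1) + 1) * (v (i, j + 2) + 1)) := by
    rw [div_eq_div_iff (key (i + 1) (j + 2)) (mul_ne_zero (key i (j + 1)) (key i (j + 2)))]
    linear_combination (-v (i + 1, j + 1)) * hA2
  -- closed forms for η
  have e00 : η (i, j) = v (i, j) / (v (i, j + 1) + 1) - v (i, j) / (v (i, j - 1) + 1) := by
    rw [hη i j]; ring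
  have e01 : η (i, j + 1) = v (i, j + 1) / (v (i, j + 2) + 1)
      - v (i, j + 1) / (v (i, j) + 1) := by
    have h := hη i (j + 1)
    rw [show j + 1 + 1 = j + 2 from by ring, show j + 1 - 1 = j from by ring] at h
    rw [h]; ring
  have e10 : η (i + 1, j)
      = v (i + 1, j) * (v (i, j) * (v (i, j + 1) - v (i + 1, j)) + v (i, j + 1) + 1)
          / ((v (i, j) + 1) * (v (i, j + 1) + 1))
        - v (i, j - 1) * (v (i + 1, j) + 1) / ((v (i, j - 1) + 1) * (v (i, j) + 1)) := by
    rw [hη (i + 1) j, mul_sub, mul_one_div, mul_one_div, hq1, hs1]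
  have e11 : η (i + 1, j + 1)
      = v (i + 1, j + 1) * (v (i, j + 1) * (v (i, j + 2) - v (i + 1, j + 1)) + v (i, j + 2) + 1)
          / ((v (i, j + 1) + 1) * (v (i, j + 2) + 1))
        - v (i, j) * (v (i + 1, j + 1) + 1) / ((v (i, j) + 1) * (v (i, j + 1) + 1)) := by
    have h := hη (i + 1) (j + 1)
    rw [show j + 1 + 1 = j + 2 from by ring, show j + 1 - 1 = j from by ring] at h
    rw [h, mul_sub, mul_one_div, mul_one_div, hr1, hq2]
  have k0 := key i (j - 1)
  have k1 := key i j
  have k2 := key i (j + 1)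
  have k3 := key i (j + 2)
  have P00 : η (i, j) * ((v (i, j - 1) + 1) * (v (i, j) + 1) * (v (i, j + 1) + 1) * (v (i, j + 2) + 1))
      = v (i, j) * (v (i, j - 1) - v (i, j + 1)) * ((v (i, j) + 1) * (v (i, j + 2) + 1)) := by
    rw [e00]; field_simp; ring
  have P01 : η (i, j + 1) * ((v (i, j - 1) + 1) * (v (i, j) + 1) * (v (i, j + 1) + 1) * (v (i, j + 2) + 1))
      = v (i, j + 1) * (v (i, j) - v (i, j + 2)) * ((v (i, j - 1) + 1) * (v (i, j + 1) + 1)) := by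
    rw [e01]; field_simp; ring
  have P10 : η (i + 1, j) * ((v (i, j - 1) + 1) * (v (i, j) + 1) * (v (i, j + 1) + 1) * (v (i, j + 2) + 1))
      = (v (i + 1, j) * (v (i, j) * (v (i, j + 1) - v (i + 1, j)) + v (i, j + 1) + 1) * (v (i, j - 1) + 1)
          - v (i, j - 1) * (v (i + 1, j) + 1) * (v (i, j + 1) + 1)) * (v (i, j + 2) + 1) := by
    rw [e10]; field_simp
  have P11 : η (i + 1, j + 1) * ((v (i, j - 1) + 1) * (v (i, j) + 1) * (v (i, j + 1) + 1) * (v (i, j + 2) + 1))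
      = (v (i + 1, j + 1) * (v (i, j + 1) * (v (i, j + 2) - v (i + 1, j + 1)) + v (i, j + 2) + 1) * (v (i, j) + 1)
          - v (i, j) * (v (i + 1, j + 1) + 1) * (v (i, j + 2) + 1)) * (v (i, j - 1) + 1) := by
    rw [e11]; field_simp
  have hM : (v (i, j - 1) + 1) * (v (i, j) + 1) * (v (i, j + 1) + 1) * (v (i, j + 2) + 1) ≠ 0 :=
    mul_ne_zero (mul_ne_zero (mul_ne_zero k0 k1) k2) k3
  apply mul_right_cancel₀ hM
  linear_combination
    (v (i, j) * (v (i, j + 1) - v (i + 1, j)) + v (i, j + 1) + 1) * P11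
    + (v (i + 1, j + 1) * (v (i, j + 1) - v (i + 1, j)) - (v (i + 1, j) + 1)) * P00
    + (v (i + 1, j + 1) * v (i, j) + v (i + 1, j + 1)) * P01
    + (-(v (i + 1, j + 1) * v (i, j) + v (i, j))) * P10
    + (1 + 1 * v (i, j + 2) + (-1) * v (i, j + 1) * v (i + 1, j + 1) + (-1) * v (i, j) * v (i + 1, j) + (-1) * v (i, j) * v (i, j + 2) * v (i + 1, j) + (-1) * v (i, j) * v (i, j + 1) * v (i + 1, j + 1) + 1 * v (i, j - 1) + 1 * v (i, j - 1) * v (i, j + 2) + (-1) * v (i, j - 1) * v (i, j + 1) * v (i + 1, j + 1) + 1 * v (i, j - 1) * v (i, j) + (-1) * v (i, j - 1) * v (i, j) * v (i + 1, j) + 1 * v (i, j - 1) * v (i, j) * v (i, j + 2) + (-1) * v (i, j - 1) * v (i, j) * v (i, j + 2) * v (i + 1, j) + 1 * v (i, j - 1) * v (i, j) * v (i, j + 1) + (-1) * v (i, j - 1) * v (i, j) * v (i, j + 1) * v (i + 1, j + 1) + 1 * v (i, j - 1) * v (i, j) * v (i, j + 1) * v (i, j + 2)) * h1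
end

section
/- Let α, β ∈ ℝ and let u : ℤ × ℤ → ℝ satisfy u(i,j) ≠ 0 for all (i,j) and the Hietarinta equation u(i+1,j+1)·(u(i,j) + β)·(u(i,j+1) + α) = u(i,j+1)·(u(i,j) + α)·(u(i+1,j) + β) for all (i,j) ∈ ℤ². Define v(i,j) = u(i+1,j)·(u(i,j) + α)/u(i,j) − α. Then v again satisfies the Hietarinta equation with the same parameters: v(i+1,j+1)·(v(i,j) + β)·(v(i,j+1) + α) = v(i,j+1)·(v(i,j) + α)·(v(i+1,j) + β) for all (i,j) ∈ ℤ². -/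
/-- The transformation v = u_{1,0}(u + α)/u − α is an autotransformation of the
Hietarinta equation u_{1,1}(u + β)(u_{0,1} + α) = u_{0,1}(u + α)(u_{1,0} + β). -/
theorem stmt_8 (α β : ℝ) (u : ℤ × ℤ → ℝ)
    (hne : ∀ i j : ℤ, u (i, j) ≠ 0)
    (heq : ∀ i j : ℤ,
      u (i + 1, j + 1) * (u (i, j) + β) * (u (i, j + 1) + α)
        = u (i, j + 1) * (u (i, j) + α) * (u (i + 1, j) + β))
    (v : ℤ × ℤ → ℝ)
    (hv : ∀ i j : ℤ, v (i, j) = u (i + 1, j) * (u (i, j) + α) / u (i, j) - α) :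
    ∀ i j : ℤ,
      v (i + 1, j + 1) * (v (i, j) + β) * (v (i, j + 1) + α)
        = v (i, j + 1) * (v (i, j) + α) * (v (i + 1, j) + β) := by
  intro i j
  have ha := hne i j
  have hb := hne (i + 1) j
  have hd := hne i (j + 1)
  have he := hne (i + 1) (j + 1)
  set a := u (i, j) with ha'
  set b := u (i + 1, j) with hb'
  set c := u (i + 1 + 1, j) with hc'
  set d := u (i, j + 1) with hd'
  set e := u (i + 1, j + 1) with he'
  set f := u (i + 1 + 1, j + 1) with hf'
  set P00 := v (i, j)
  set P10 := v (i + 1, j)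
  set P01 := v (i, j + 1)
  set P11 := v (i + 1, j + 1)
  have g1 : P00 * a = b * (a + α) - α * a := by
    show v (i, j) * a = _
    rw [hv i j, ← ha', ← hb', sub_mul, div_mul_cancel₀ _ ha]
  have g2 : P10 * b = c * (b + α) - α * b := by
    show v (i + 1, j) * b = _
    rw [hv (i + 1) j, ← hb', ← hc', sub_mul, div_mul_cancel₀ _ hb]
  have g3 : P01 * d = e * (d + α) - α * d := by
    show v (i, j + 1) * d = _
    rw [hv i (j + 1), ← hd', ← he', sub_mul, div_mul_cancel₀ _ hd]
  have g4 : P11 * e = f * (e + α) - α * e := by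
    show v (i + 1, j + 1) * e = _
    rw [hv (i + 1) (j + 1), ← he', ← hf', sub_mul, div_mul_cancel₀ _ he]
  have g5 := heq i j
  have g6 := heq (i + 1) j
  have habde : a * b * d * e ≠ 0 := by
    exact mul_ne_zero (mul_ne_zero (mul_ne_zero ha hb) hd) he
  apply mul_right_cancel₀ habde
  linear_combination ((P11*b*d*e*α) + ((-1)*P01*b*d*e*β) + (P01*P11*b*d*e) + ((-1)*P10*P01*b*d*e)) * g1 + (((-1)*P01*b*d*e*α) + ((-1)*P01*a*b*d*e)) * g2 + (((-1)*b*b*e*α*β) + (b*b*e*α*α) + ((-1)*a*b*b*e*β) + (a*b*b*e*α) + ((-1)*c*b*e*α*α) + ((-1)*c*b*b*e*α) + ((-1)*c*a*b*e*α) + ((-1)*c*a*b*b*e) + (P11*b*b*e*α) + (P11*a*b*e*β) + ((-1)*P11*a*b*e*α) + (P11*a*b*b*e)) * g3 + ((b*b*e*α*α) + (b*b*d*e*α) + (a*b*e*α*β) + ((-1)*a*b*e*α*α) + (a*b*d*e*β) + ((-1)*a*b*d*e*α) + (a*b*b*e*α) + (a*b*b*d*e)) * g4 + (((-1)*e*α*α*β)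 + (e*e*α*β) + ((-1)*b*e*α*β) + (b*e*α*α) + (b*e*e*β) + (f*α*α*β) + ((-1)*f*e*e*β) + ((-1)*f*b*e*α) + ((-1)*f*b*e*e) + ((-1)*c*e*α*α) + (c*e*e*α) + ((-1)*c*b*e*α) + (c*b*e*e)) * g5 + (((-1)*e*α*α*β) + (e*e*α*β) + (d*α*α*β) + ((-2)*d*e*α*β) + (d*e*e*β) + (b*e*α*α) + ((-1)*a*e*α*α) + (a*e*e*α) + (a*d*α*β) + ((-1)*a*d*e*β) + ((-1)*a*d*e*α) + (a*d*e*e) + (a*b*e*α)) * g6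
end

section
/- Let α, β ∈ ℝ and let u : ℤ × ℤ → ℝ satisfy β + u(i,j) − u(i,j+1) ≠ 0 for all (i,j) and the Hietarinta equation u(i+1,j+1)·(u(i,j) + β)·(u(i,j+1) + α) = u(i,j+1)·(u(i,j) + α)·(u(i+1,j) + β) for all (i,j) ∈ ℤ². Define w(i,j) = β·u(i,j+1)/(β + u(i,j) − u(i,j+1)). Then w again satisfies the Hietarinta equation with the same parameters: w(i+1,j+1)·(w(i,j) + β)·(w(i,j+1) + α) = w(i,j+1)·(w(i,j) + α)·(w(i+1,j) + β) for all (i,j) ∈ ℤ². -/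
set_option maxHeartbeats 2000000 in
lemma stmt_9_aux (α β a b c d e f : ℝ)
    (hD1 : β + a - b ≠ 0) (hD2 : β + b - c ≠ 0) (hD3 : β + d - e ≠ 0)
    (hD4 : β + f - d ≠ 0)
    (h1 : d * (a + β) * (b + α) = b * (a + α) * (f + β))
    (h2 : e * (b + β) * (c + α) = c * (b + α) * (d + β)) :
    β * e / (β + d - e) * (β * b / (β + a - b) + β) * (β * c / (β + b - c) + α)
      = β * c / (β + b - c) * (β * b / (β + a - b) + α) * (β * d / (β + f - d) + β) := by
  field_simp
  linear_combination
    (-(c*β^3) + c*e*β^2 - c*d*β^2) * h1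
    + (β^4 + f*β^3 - d*β^3 + a*β^3 + a*f*β^2 - a*d*β^2) * h2

/-- The transformation w = βu_{0,1}/(β + u − u_{0,1}) is an autotransformation of
the Hietarinta equation u_{1,1}(u + β)(u_{0,1} + α) = u_{0,1}(u + α)(u_{1,0} + β). -/
theorem stmt_9 (α β : ℝ) (u : ℤ × ℤ → ℝ)
    (hne : ∀ i j : ℤ, β + u (i, j) - u (i, j + 1) ≠ 0)
    (heq : ∀ i j : ℤ,
      u (i + 1, j + 1) * (u (i, j) + β) * (u (i, j + 1) + α)
        = u (i, j + 1) * (u (i, j) + α) * (u (i + 1, j) + β))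
    (w : ℤ × ℤ → ℝ)
    (hw : ∀ i j : ℤ, w (i, j) = β * u (i, j + 1) / (β + u (i, j) - u (i, j + 1))) :
    ∀ i j : ℤ,
      w (i + 1, j + 1) * (w (i, j) + β) * (w (i, j + 1) + α)
        = w (i, j + 1) * (w (i, j) + α) * (w (i + 1, j) + β) := by
  intro i j
  have e2 : (j : ℤ) + 1 + 1 = j + 2 := by ring
  have h1 := heq i j
  have h2 := heq i (j + 1)
  rw [e2] at h2
  have hD2 := hne i (j + 1)
  rw [e2] at hD2
  have hD3 := hne (i + 1) (j + 1)
  rw [e2] at hD3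
  rw [hw (i+1) (j+1), hw i j, hw i (j+1), hw (i+1) j, e2]
  exact stmt_9_aux α β (u (i,j)) (u (i,j+1)) (u (i,j+2)) (u (i+1,j+1)) (u (i+1,j+2))
    (u (i+1,j)) (hne i j) hD2 hD3 (hne (i+1) j) h1 h2
end

section
/- Let u : ℤ × ℤ → ℝ satisfy u(i,j) ≠ 0 and u(i,j) ≠ 1 for all (i,j), together with the discrete Liouville equation u(i+1,j+1)·u(i,j) = (u(i+1,j) − 1)·(u(i,j+1) − 1) for all (i,j) ∈ ℤ². Define I(i,j) = ( u(i+2,j)/(u(i+1,j) − 1) + 1 ) · ( (u(i,j) − 1)/u(i+1,j) + 1 ) and J(i,j) = ( u(i,j+2)/(u(i,j+1) − 1) + 1 ) · ( (u(i,j) − 1)/u(i,j+1) + 1 ). Then for all (i,j) ∈ ℤ², I(i,j+1) = I(i,j) and J(i+1,j) = J(i,j). -/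
lemma key_liouville (a b c a' b' c' : ℝ) (hb : b ≠ 0) (hb1 : b ≠ 1) (hb' : b' ≠ 0)
    (hb1' : b' ≠ 1)
    (h1 : b' * a = (b - 1) * (a' - 1)) (h2 : c' * b = (c - 1) * (b' - 1)) :
    (c' / (b' - 1) + 1) * ((a' - 1) / b' + 1)
      = (c / (b - 1) + 1) * ((a - 1) / b + 1) := by
  have hb1s : b - 1 ≠ 0 := sub_ne_zero.mpr hb1
  have hb1s' : b' - 1 ≠ 0 := sub_ne_zero.mpr hb1'
  field_simp
  linear_combination (-((b'-1)*(c+b-1)) - (c'*b - (c-1)*(b'-1))) * h1 + b'*(a+b-1) * h2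

/-- The functions I and J are, respectively, an i-integral and a j-integral of
the discrete Liouville equation u_{1,1}·u = (u_{1,0} − 1)(u_{0,1} − 1). -/
theorem stmt_10 (u : ℤ × ℤ → ℝ)
    (hne0 : ∀ i j : ℤ, u (i, j) ≠ 0)
    (hne1 : ∀ i j : ℤ, u (i, j) ≠ 1)
    (heq : ∀ i j : ℤ,
      u (i + 1, j + 1) * u (i, j) = (u (i + 1, j) - 1) * (u (i, j + 1) - 1))
    (I J : ℤ × ℤ → ℝ)
    (hI : ∀ i j : ℤ, I (i, j)
      = (u (i + 2, j) / (u (i + 1, j) - 1) + 1) * ((u (i, j) - 1) / u (i + 1, j) + 1))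
    (hJ : ∀ i j : ℤ, J (i, j)
      = (u (i, j + 2) / (u (i, j + 1) - 1) + 1) * ((u (i, j) - 1) / u (i, j + 1) + 1)) :
    ∀ i j : ℤ, I (i, j + 1) = I (i, j) ∧ J (i + 1, j) = J (i, j) := by
  intro i j
  constructor
  · rw [hI, hI]
    have h2 := heq (i + 1) j
    rw [show (i : ℤ) + 1 + 1 = i + 2 from by ring] at h2
    exact key_liouville (u (i, j)) (u (i+1, j)) (u (i+2, j)) (u (i, j+1)) (u (i+1, j+1))
      (u (i+2, j+1)) (hne0 _ _) (hne1 _ _) (hne0 _ _) (hne1 _ _) (heq i j) h2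
  · rw [hJ, hJ]
    have h1 : u (i+1, j+1) * u (i, j) = (u (i, j+1) - 1) * (u (i+1, j) - 1) := by
      linear_combination heq i j
    have h2 : u (i+1, j+2) * u (i, j+1) = (u (i, j+2) - 1) * (u (i+1, j+1) - 1) := by
      have := heq i (j + 1)
      rw [show (j : ℤ) + 1 + 1 = j + 2 from by ring] at this
      linear_combination this
    exact key_liouville (u (i, j)) (u (i, j+1)) (u (i, j+2)) (u (i+1, j)) (u (i+1, j+1))
      (u (i+1, j+2)) (hne0 _ _) (hne1 _ _) (hne0 _ _) (hne1 _ _) h1 h2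
end

section
/- Let z : ℤ × ℤ → ℝ satisfy the discrete wave equation z(i+1,j+1) = z(i+1,j) + z(i,j+1) − z(i,j) for all (i,j) ∈ ℤ², and assume z(i+1,j) ≠ z(i,j) and z(i,j+1) ≠ z(i,j) for all (i,j). Define u(i,j) = z(i,j+1)·z(i+1,j) / ( (z(i+1,j) − z(i,j))·(z(i,j+1) − z(i,j)) ). Then u satisfies the discrete Liouville equation u(i+1,j+1)·u(i,j) = (u(i+1,j) − 1)·(u(i,j+1) − 1) for all (i,j) ∈ ℤ². -/
lemma liouville_key (a b c e f : ℝ) (hba : b - a ≠ 0) (hca : c - a ≠ 0)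
    (heb : e - b ≠ 0) (hfc : f - c ≠ 0) :
    (b + c - a + f - c) * (e + (b + c - a) - b) /
        ((e + (b + c - a) - b - (b + c - a)) * (b + c - a + f - c - (b + c - a))) *
      (c * b / ((b - a) * (c - a))) =
    ((b + c - a) * e / ((e - b) * (b + c - a - b)) - 1) *
      (f * (b + c - a) / ((b + c - a - c) * (f - c)) - 1) := by
  have d1 : e + (b + c - a) - b - (b + c - a) = e - b := by ring
  have d2 : b + c - a + f - c - (b + c - a) = f - c := by ring
  have d3 : b + c - a - b = c - a := by ring
  have d4 : b + c - a - c = b - a := by ring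
  rw [d1, d2, d3, d4]
  field_simp
  ring

/-- The substitution u = z_{0,1} z_{1,0} / ((z_{1,0} − z)(z_{0,1} − z)) maps
solutions of the discrete wave equation z_{1,1} = z_{1,0} + z_{0,1} − z into
solutions of the discrete Liouville equation u_{1,1}·u = (u_{1,0} − 1)(u_{0,1} − 1). -/
theorem stmt_11 (z : ℤ × ℤ → ℝ)
    (heq : ∀ i j : ℤ, z (i + 1, j + 1) = z (i + 1, j) + z (i, j + 1) - z (i, j))
    (hne1 : ∀ i j : ℤ, z (i + 1, j) ≠ z (i, j))
    (hne2 : ∀ i j : ℤ, z (i, j + 1) ≠ z (i, j))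
    (u : ℤ × ℤ → ℝ)
    (hu : ∀ i j : ℤ, u (i, j)
      = z (i, j + 1) * z (i + 1, j) / ((z (i + 1, j) - z (i, j)) * (z (i, j + 1) - z (i, j)))) :
    ∀ i j : ℤ,
      u (i + 1, j + 1) * u (i, j) = (u (i + 1, j) - 1) * (u (i, j + 1) - 1) := by
  intro i j
  rw [hu (i + 1) (j + 1), hu i j, hu (i + 1) j, hu i (j + 1),
    heq (i + 1) j, heq i (j + 1), heq i j]
  exact liouville_key _ _ _ _ _ (sub_ne_zero.mpr (hne1 i j)) (sub_ne_zero.mpr (hne2 i j))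
    (sub_ne_zero.mpr (hne1 (i + 1) j)) (sub_ne_zero.mpr (hne2 i (j + 1)))
end

section
/- Let u : ℤ × ℤ → ℝ satisfy u(i,j) ≠ 0 and u(i,j) ≠ 1 for all (i,j), together with the discrete Liouville equation u(i+1,j+1)·u(i,j) = (u(i+1,j) − 1)·(u(i,j+1) − 1) for all (i,j) ∈ ℤ². Define v(i,j) = u(i+1,j)/(u(i,j) − 1). Then v satisfies, for all (i,j) ∈ ℤ², the equation v(i,j)·(v(i+1,j+1) − v(i+1,j))·(v(i,j+1) + 1) = (v(i+1,j) + 1)·(v(i,j+1) − v(i,j)). -/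
set_option maxHeartbeats 1000000 in
private lemma key12 (a b c e : ℝ) (ha0 : a ≠ 0) (hb0 : b ≠ 0)
    (ha : a - 1 ≠ 0) (hb : b - 1 ≠ 0) (hc : c - 1 ≠ 0)
    (hd : (b - 1) * (c - 1) / a - 1 ≠ 0) :
    (b / (a - 1)) *
      ((e - 1) * ((b - 1) * (c - 1) / a - 1) / b / ((b - 1) * (c - 1) / a - 1)
        - e / (b - 1)) *
      ((b - 1) * (c - 1) / a / (c - 1) + 1)
      = (e / (b - 1) + 1) * ((b - 1) * (c - 1) / a / (c - 1) - b / (a - 1)) := by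
  have h : (e - 1) * ((b - 1) * (c - 1) / a - 1) / b / ((b - 1) * (c - 1) / a - 1) = (e - 1) / b := by
    rw [div_div, mul_comm b, ← div_div, mul_div_assoc, div_self hd, mul_one]
  rw [h]
  field_simp
  ring

/-- The non-point invertible transformation v = u_{1,0}/(u − 1) maps solutions of
the discrete Liouville equation u_{1,1}·u = (u_{1,0} − 1)(u_{0,1} − 1) into
solutions of v(v_{1,1} − v_{1,0})(v_{0,1} + 1) = (v_{1,0} + 1)(v_{0,1} − v). -/
theorem stmt_12 (u : ℤ × ℤ → ℝ)
    (hne0 : ∀ i j : ℤ, u (i, j) ≠ 0)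
    (hne1 : ∀ i j : ℤ, u (i, j) ≠ 1)
    (heq : ∀ i j : ℤ,
      u (i + 1, j + 1) * u (i, j) = (u (i + 1, j) - 1) * (u (i, j + 1) - 1))
    (v : ℤ × ℤ → ℝ)
    (hv : ∀ i j : ℤ, v (i, j) = u (i + 1, j) / (u (i, j) - 1)) :
    ∀ i j : ℤ,
      v (i, j) * (v (i + 1, j + 1) - v (i + 1, j)) * (v (i, j + 1) + 1)
        = (v (i + 1, j) + 1) * (v (i, j + 1) - v (i, j)) := by
  intro i j
  have ha := sub_ne_zero.2 (hne1 i j)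
  have hb := sub_ne_zero.2 (hne1 (i+1) j)
  have hc := sub_ne_zero.2 (hne1 i (j+1))
  have hd := sub_ne_zero.2 (hne1 (i+1) (j+1))
  have ha0 := hne0 i j
  have hb0 := hne0 (i+1) j
  have hd1 : u (i+1, j+1) = (u (i+1, j) - 1) * (u (i, j+1) - 1) / u (i, j) :=
    eq_div_of_mul_eq ha0 (heq i j)
  have hf1 : u (i+1+1, j+1) = (u (i+1+1, j) - 1) * (u (i+1, j+1) - 1) / u (i+1, j) :=
    eq_div_of_mul_eq hb0 (heq (i+1) j)
  rw [hv, hv, hv, hv, hf1, hd1]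
  rw [hd1] at hd
  exact key12 _ _ _ _ ha0 hb0 ha hb hc hd
end

section
/- Let v : ℤ × ℤ → ℝ satisfy v(i,j) ≠ 0 for all (i,j) and the equation v(i,j)·(v(i+1,j+1) − v(i+1,j))·(v(i,j+1) + 1) = (v(i+1,j) + 1)·(v(i,j+1) − v(i,j)) for all (i,j) ∈ ℤ², and assume v(i,j+3) ≠ v(i,j+2) and v(i,j+1) ≠ v(i,j) for all (i,j). Define I(i,j) = v(i+1,j) + (v(i+1,j) + 1)/v(i,j) and J(i,j) = (v(i,j+3) − v(i,j+1))·(v(i,j+2) − v(i,j)) / ( (v(i,j+3) − v(i,j+2))·(v(i,j+1) − v(i,j)) ). Then for all (i,j) ∈ ℤ², I(i,j+1) = I(i,j) and J(i+1,j) = J(i,j). -/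
private lemma aux_I (a b c d : ℝ) (ha : a ≠ 0) (hb : b ≠ 0)
    (h : a * (d - c) * (b + 1) = (c + 1) * (b - a)) :
    d + (d + 1) / b = c + (c + 1) / a := by
  field_simp
  linear_combination h

private lemma aux_J (a0 a1 a2 a3 b0 b1 b2 b3 : ℝ)
    (ha0 : a0 ≠ 0) (ha1 : a1 ≠ 0) (ha2 : a2 ≠ 0) (ha3 : a3 ≠ 0)
    (d10 : a1 ≠ a0) (d21 : a2 ≠ a1) (d32 : a3 ≠ a2)
    (e10 : b1 ≠ b0) (e21 : b2 ≠ b1) (e32 : b3 ≠ b2)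
    (E0 : a0 * (b1 - b0) * (a1 + 1) = (b0 + 1) * (a1 - a0))
    (E1 : a1 * (b2 - b1) * (a2 + 1) = (b1 + 1) * (a2 - a1))
    (E2 : a2 * (b3 - b2) * (a3 + 1) = (b2 + 1) * (a3 - a2)) :
    (b3 - b1) * (b2 - b0) / ((b3 - b2) * (b1 - b0))
      = (a3 - a1) * (a2 - a0) / ((a3 - a2) * (a1 - a0)) := by
  -- rewritten relations
  have R0 : (b1 + 1) * (a0 * (a1 + 1)) = (b0 + 1) * (a1 * (a0 + 1)) := by linear_combination E0
  have R1 : (b2 + 1) * (a1 * (a2 + 1)) = (b1 + 1) * (a2 * (a1 + 1)) := by linear_combination E1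
  have R2 : (b3 + 1) * (a2 * (a3 + 1)) = (b2 + 1) * (a3 * (a2 + 1)) := by linear_combination E2
  by_cases h1m : a1 = -1
  · have h0m : a0 ≠ -1 := fun h => d10 (h1m.trans h.symm)
    have h2m : a2 ≠ -1 := fun h => d21 (h.trans h1m.symm)
    have hb0 : b0 = -1 := by
      have := R0
      rw [h1m] at this
      have h2 : (b0 + 1) * (-1 * (a0 + 1)) = 0 := by linear_combination -this
      rcases mul_eq_zero.1 h2 with h | h
      · linarith
      · exfalso; apply h0m; linarith [h]
    have hb2 : b2 = -1 := by
      have := R1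
      rw [h1m] at this
      have h2 : (b2 + 1) * (-1 * (a2 + 1)) = 0 := by linear_combination this
      rcases mul_eq_zero.1 h2 with h | h
      · linarith
      · exfalso; apply h2m; linarith [h]
    have ha3m : a3 = -1 := by
      by_contra h3m
      have := R2
      rw [hb2] at this
      have h2 : (b3 + 1) * (a2 * (a3 + 1)) = 0 := by linear_combination this
      rcases mul_eq_zero.1 h2 with h | h
      · apply e32; rw [hb2]; linarith
      · rcases mul_eq_zero.1 h with h | h
        · exact ha2 h
        · exact h3m (by linarith)
    rw [hb2, hb0, h1m, ha3m]
    norm_num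
  by_cases h2m : a2 = -1
  · have h1m' : a1 ≠ -1 := h1m
    have h3m : a3 ≠ -1 := fun h => d32 (h.trans h2m.symm)
    have hb1 : b1 = -1 := by
      have := R1
      rw [h2m] at this
      have h2 : (b1 + 1) * (-1 * (a1 + 1)) = 0 := by linear_combination -this
      rcases mul_eq_zero.1 h2 with h | h
      · linarith
      · exfalso; apply h1m'; linarith [h]
    have hb3 : b3 = -1 := by
      have := R2
      rw [h2m] at this
      have h2 : (b3 + 1) * (-1 * (a3 + 1)) = 0 := by linear_combination this
      rcases mul_eq_zero.1 h2 with h | h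
      · linarith
      · exfalso; apply h3m; linarith [h]
    have ha0m : a0 = -1 := by
      by_contra h0m
      have := R0
      rw [hb1] at this
      have h2 : (b0 + 1) * (a1 * (a0 + 1)) = 0 := by linear_combination -this
      rcases mul_eq_zero.1 h2 with h | h
      · apply e10; rw [hb1]; linarith
      · rcases mul_eq_zero.1 h with h | h
        · exact ha1 h
        · exact h0m (by linarith)
    rw [hb1, hb3, h2m, ha0m]
    norm_num
  -- main case
  have h1p : a1 + 1 ≠ 0 := fun h => h1m (by linarith)
  have h2p : a2 + 1 ≠ 0 := fun h => h2m (by linarith)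
  have h0p : a0 + 1 ≠ 0 := by
    intro h
    have hb1 : b1 = -1 := by
      have h2 : (b1 + 1) * (a0 * (a1 + 1)) = 0 := by linear_combination R0 + (b0+1)*a1*h
      rcases mul_eq_zero.1 h2 with hx | hx
      · linarith
      · exact absurd hx (mul_ne_zero ha0 h1p)
    have hb2 : b2 = -1 := by
      have h2 : (b2 + 1) * (a1 * (a2 + 1)) = 0 := by linear_combination R1 + a2*(a1+1)*hb1
      rcases mul_eq_zero.1 h2 with hx | hx
      · linarith
      · exact absurd hx (mul_ne_zero ha1 h2p)
    exact e21 (by rw [hb1, hb2])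
  have h3p : a3 + 1 ≠ 0 := by
    intro h
    have hb2 : b2 = -1 := by
      have h2 : (b2 + 1) * (a3 * (a2 + 1)) = 0 := by linear_combination -R2 + (b3+1)*a2*h
      rcases mul_eq_zero.1 h2 with hx | hx
      · linarith
      · exact absurd hx (mul_ne_zero ha3 h2p)
    have hb1 : b1 = -1 := by
      have h2 : (b1 + 1) * (a2 * (a1 + 1)) = 0 := by linear_combination -R1 + a1*(a2+1)*hb2
      rcases mul_eq_zero.1 h2 with hx | hx
      · linarith
      · exact absurd hx (mul_ne_zero ha2 h1p)
    exact e21 (by rw [hb1, hb2])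
  -- chained relations: (b_k+1)*(a0*(a_k+1)) = (b0+1)*(a_k*(a0+1))
  have H1 : (b1 + 1) * (a0 * (a1 + 1)) = (b0 + 1) * (a1 * (a0 + 1)) := R0
  have H2 : (b2 + 1) * (a0 * (a2 + 1)) = (b0 + 1) * (a2 * (a0 + 1)) := by
    have hX : ((b2 + 1) * (a0 * (a2 + 1))) * a1 = ((b0 + 1) * (a2 * (a0 + 1))) * a1 := by
      linear_combination a0 * R1 + a2 * R0
    exact mul_right_cancel₀ ha1 hX
  have H3 : (b3 + 1) * (a0 * (a3 + 1)) = (b0 + 1) * (a3 * (a0 + 1)) := by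
    have hX : ((b3 + 1) * (a0 * (a3 + 1))) * (a1 * a2) = ((b0 + 1) * (a3 * (a0 + 1))) * (a1 * a2) := by
      linear_combination a0 * a1 * R2 + a0 * a3 * R1 + a2 * a3 * R0
    exact mul_right_cancel₀ (mul_ne_zero ha1 ha2) hX
  -- difference relations
  have D31 : (b3 - b1) * (a0 * (a3 + 1) * (a1 + 1)) = (b0 + 1) * (a0 + 1) * (a3 - a1) := by
    linear_combination (a1 + 1) * H3 - (a3 + 1) * H1
  have D20 : (b2 - b0) * (a0 * (a2 + 1) * (a0 + 1)) = (b0 + 1) * (a0 + 1) * (a2 - a0) := by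
    linear_combination (a0 + 1) * H2
  have D32 : (b3 - b2) * (a0 * (a3 + 1) * (a2 + 1)) = (b0 + 1) * (a0 + 1) * (a3 - a2) := by
    linear_combination (a2 + 1) * H3 - (a3 + 1) * H2
  have D10 : (b1 - b0) * (a0 * (a1 + 1) * (a0 + 1)) = (b0 + 1) * (a0 + 1) * (a1 - a0) := by
    linear_combination (a0 + 1) * H1
  rw [div_eq_div_iff (mul_ne_zero (sub_ne_zero.2 e32) (sub_ne_zero.2 e10))
    (mul_ne_zero (sub_ne_zero.2 d32) (sub_ne_zero.2 d10))]
  -- scaled cancellation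
  have S : ((b3 - b1) * (b2 - b0) * ((a3 - a2) * (a1 - a0)))
        * (a0 * a0 * (a0+1) * (a1+1) * (a2+1) * (a3+1))
      = ((a3 - a1) * (a2 - a0) * ((b3 - b2) * (b1 - b0)))
        * (a0 * a0 * (a0+1) * (a1+1) * (a2+1) * (a3+1)) := by
    linear_combination ((a3-a2)*(a1-a0)*(b2-b0)*(a0*(a2+1)*(a0+1))) * D31
      + ((a3-a2)*(a1-a0)*((b0+1)*(a0+1)*(a3-a1))) * D20
      - ((a3-a1)*(a2-a0)*(b1-b0)*(a0*(a1+1)*(a0+1))) * D32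
      - ((a3-a1)*(a2-a0)*((b0+1)*(a0+1)*(a3-a2))) * D10
  exact mul_right_cancel₀ (by
    refine mul_ne_zero (mul_ne_zero (mul_ne_zero (mul_ne_zero (mul_ne_zero ?_ ?_) ?_) ?_) ?_) ?_ <;>
      assumption) S

/-- The functions I and J are, respectively, an i-integral and a j-integral of
the equation v(v_{1,1} − v_{1,0})(v_{0,1} + 1) = (v_{1,0} + 1)(v_{0,1} − v). -/
theorem stmt_13 (v : ℤ × ℤ → ℝ)
    (hne0 : ∀ i j : ℤ, v (i, j) ≠ 0)
    (heq : ∀ i j : ℤ,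
      v (i, j) * (v (i + 1, j + 1) - v (i + 1, j)) * (v (i, j + 1) + 1)
        = (v (i + 1, j) + 1) * (v (i, j + 1) - v (i, j)))
    (hne3 : ∀ i j : ℤ, v (i, j + 3) ≠ v (i, j + 2))
    (hne1 : ∀ i j : ℤ, v (i, j + 1) ≠ v (i, j))
    (I J : ℤ × ℤ → ℝ)
    (hI : ∀ i j : ℤ, I (i, j) = v (i + 1, j) + (v (i + 1, j) + 1) / v (i, j))
    (hJ : ∀ i j : ℤ, J (i, j)
      = (v (i, j + 3) - v (i, j + 1)) * (v (i, j + 2) - v (i, j))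
        / ((v (i, j + 3) - v (i, j + 2)) * (v (i, j + 1) - v (i, j)))) :
    ∀ i j : ℤ, I (i, j + 1) = I (i, j) ∧ J (i + 1, j) = J (i, j) := by
  intro i j
  have hj2 : j + 1 + 1 = j + 2 := by ring
  have hj3 : j + 2 + 1 = j + 3 := by ring
  constructor
  · rw [hI i (j + 1), hI i j]
    exact aux_I _ _ _ _ (hne0 i j) (hne0 i (j + 1)) (heq i j)
  · rw [hJ (i + 1) j, hJ i j]
    have E1 := heq i (j + 1)
    have E2 := heq i (j + 2)
    rw [hj2] at E1
    rw [hj3] at E2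
    have d21 := hne1 i (j + 1)
    have e21 := hne1 (i + 1) (j + 1)
    have d32 := hne1 i (j + 2)
    rw [hj2] at d21 e21
    rw [hj3] at d32
    exact aux_J _ _ _ _ _ _ _ _ (hne0 i j) (hne0 i (j + 1)) (hne0 i (j + 2))
      (hne0 i (j + 3)) (hne1 i j) d21 d32 (hne1 (i + 1) j) e21 (hne3 (i + 1) j)
      (heq i j) E1 E2
end

section
/- Let α : ℤ → ℝ and β : ℤ → ℝ be sequences such that α(i) + β(j) ≠ 0 for all i, j and α(i+2) ≠ α(i+1) for all i. Define v(i,j) = (α(i+2) + β(j))·(α(i+1) − α(i)) / ( (α(i) + β(j))·(α(i+2) − α(i+1)) ). Then v satisfies, for all (i,j) ∈ ℤ², the equation v(i,j)·(v(i+1,j+1) − v(i+1,j))·(v(i,j+1) + 1) = (v(i+1,j) + 1)·(v(i,j+1) − v(i,j)). -/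
/-- The two-parameter family built from arbitrary sequences α, β gives explicit
solutions of the equation v(v_{1,1} − v_{1,0})(v_{0,1} + 1) = (v_{1,0} + 1)(v_{0,1} − v). -/
theorem stmt_14 (α β : ℤ → ℝ)
    (hne : ∀ i j : ℤ, α i + β j ≠ 0)
    (hα : ∀ i : ℤ, α (i + 2) ≠ α (i + 1))
    (v : ℤ × ℤ → ℝ)
    (hv : ∀ i j : ℤ, v (i, j)
      = (α (i + 2) + β j) * (α (i + 1) - α i) / ((α i + β j) * (α (i + 2) - α (i + 1)))) :
    ∀ i j : ℤ,
      v (i, j) * (v (i + 1, j + 1) - v (i + 1, j)) * (v (i, j + 1) + 1)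
        = (v (i + 1, j) + 1) * (v (i, j + 1) - v (i, j)) := by
  intro i j
  have h1 : i + 1 + 2 = i + 3 := by ring
  have h2 : i + 1 + 1 = i + 2 := by ring
  rw [hv i j, hv (i+1) (j+1), hv (i+1) j, hv i (j+1), h1, h2]
  have d1 : α i + β j ≠ 0 := hne i j
  have d2 : α i + β (j+1) ≠ 0 := hne i (j+1)
  have d3 : α (i+1) + β j ≠ 0 := hne (i+1) j
  have d4 : α (i+1) + β (j+1) ≠ 0 := hne (i+1) (j+1)
  have d5 : α (i+2) - α (i+1) ≠ 0 := sub_ne_zero.mpr (hα i)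
  have d6 : α (i+3) - α (i+2) ≠ 0 := by
    have := hα (i+1); rw [h1, h2] at this; exact sub_ne_zero.mpr this
  field_simp
  ring
end

section
/- Let v : ℤ × ℤ → ℝ satisfy the equation v(i+1,j+1)·v(i,j) = v(i+1,j)·v(i,j+1) − 1 for all (i,j) ∈ ℤ². Define u(i,j) = v(i+1,j)·v(i,j+1). Then u satisfies the discrete Liouville equation u(i+1,j+1)·u(i,j) = (u(i+1,j) − 1)·(u(i,j+1) − 1) for all (i,j) ∈ ℤ². -/
/-- The non-invertible transformation u = v_{1,0} v_{0,1} maps solutions of the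
other discrete Liouville equation v_{1,1}·v = v_{1,0}·v_{0,1} − 1 into solutions
of the discrete Liouville equation u_{1,1}·u = (u_{1,0} − 1)(u_{0,1} − 1). -/
theorem stmt_15 (v : ℤ × ℤ → ℝ)
    (heq : ∀ i j : ℤ,
      v (i + 1, j + 1) * v (i, j) = v (i + 1, j) * v (i, j + 1) - 1)
    (u : ℤ × ℤ → ℝ)
    (hu : ∀ i j : ℤ, u (i, j) = v (i + 1, j) * v (i, j + 1)) :
    ∀ i j : ℤ,
      u (i + 1, j + 1) * u (i, j) = (u (i + 1, j) - 1) * (u (i, j + 1) - 1) := by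
  intro i j
  have h1 := heq (i + 1) j
  have h2 := heq i (j + 1)
  simp only [hu]
  linear_combination (v (i + 1, j + 1 + 1) * v (i, j + 1)) * h1 +
    (v (i + 1 + 1, j) * v (i + 1, j + 1) - 1) * h2
end

section
/- Let u : ℤ → ℝ → ℝ be such that each u i is twice differentiable, u i x ≠ 0 for all i ∈ ℤ and x ∈ ℝ, and u satisfies the semi-discrete Liouville equation: for all i ∈ ℤ and x ∈ ℝ, (u (i+1))'(x) = u (i+1) x · ( u (i+1) x + (u i)'(x)/(u i x) + u i x ). Define X i x = 2·(u i)''(x)/(u i x) − 3·((u i)'(x))²/(u i x)² − (u i x)² and I i x = (1 + u (i+1) x / u (i+2) x)·(1 + u (i+1) x / u i x). Then for all i ∈ ℤ and x ∈ ℝ, X (i+1) x = X i x, and for each i the function x ↦ I i x is constant (its derivative vanishes identically). -/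
/-- X and I are, respectively, an i-integral and an x-integral of the
semi-discrete Liouville equation (u₁)ₓ = u₁(u₁ + uₓ/u + u). -/
theorem stmt_16 (u : ℤ → ℝ → ℝ)
    (hdiff : ∀ i : ℤ, Differentiable ℝ (u i))
    (hdiff2 : ∀ i : ℤ, Differentiable ℝ (deriv (u i)))
    (hne : ∀ (i : ℤ) (x : ℝ), u i x ≠ 0)
    (heq : ∀ (i : ℤ) (x : ℝ),
      deriv (u (i + 1)) x
        = u (i + 1) x * (u (i + 1) x + deriv (u i) x / u i x + u i x))
    (X I : ℤ → ℝ → ℝ)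
    (hX : ∀ (i : ℤ) (x : ℝ), X i x
      = 2 * deriv (deriv (u i)) x / u i x
        - 3 * (deriv (u i) x) ^ 2 / (u i x) ^ 2 - (u i x) ^ 2)
    (hI : ∀ (i : ℤ) (x : ℝ), I i x
      = (1 + u (i + 1) x / u (i + 2) x) * (1 + u (i + 1) x / u i x)) :
    (∀ (i : ℤ) (x : ℝ), X (i + 1) x = X i x)
      ∧ (∀ (i : ℤ) (x : ℝ), deriv (I i) x = 0) := by
  constructor
  · intro i x
    have hv : HasDerivAt (u i) (deriv (u i) x) x := (hdiff i x).hasDerivAt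
    have hv' : HasDerivAt (deriv (u i)) (deriv (deriv (u i)) x) x :=
      (hdiff2 i x).hasDerivAt
    have hw : HasDerivAt (u (i+1)) (deriv (u (i+1)) x) x := (hdiff (i+1) x).hasDerivAt
    have hR : HasDerivAt
        (fun y => u (i+1) y * (u (i+1) y + deriv (u i) y / u i y + u i y))
        (deriv (u (i+1)) x * (u (i+1) x + deriv (u i) x / u i x + u i x)
          + u (i+1) x * (deriv (u (i+1)) x
            + (deriv (deriv (u i)) x * u i x - deriv (u i) x * deriv (u i) x) / (u i x)^2
            + deriv (u i) x)) x :=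
      hw.mul ((hw.add (hv'.div hv (hne i x))).add hv)
    have hfun : deriv (u (i+1))
        = fun y => u (i+1) y * (u (i+1) y + deriv (u i) y / u i y + u i y) :=
      funext (heq i)
    have hw2 : deriv (deriv (u (i+1))) x
        = deriv (u (i+1)) x * (u (i+1) x + deriv (u i) x / u i x + u i x)
          + u (i+1) x * (deriv (u (i+1)) x
            + (deriv (deriv (u i)) x * u i x - deriv (u i) x * deriv (u i) x) / (u i x)^2
            + deriv (u i) x) := by
      conv_lhs => rw [hfun]
      exact hR.deriv
    rw [hX, hX, hw2, heq i x]
    have h1 := hne i x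
    have h2 := hne (i+1) x
    field_simp
    ring
  · intro i x
    have hv : HasDerivAt (u i) (deriv (u i) x) x := (hdiff i x).hasDerivAt
    have hw : HasDerivAt (u (i+1)) (deriv (u (i+1)) x) x := (hdiff (i+1) x).hasDerivAt
    have hz : HasDerivAt (u (i+2)) (deriv (u (i+2)) x) x := (hdiff (i+2) x).hasDerivAt
    have hf1 : HasDerivAt (fun y => u (i+1) y / u (i+2) y)
        ((deriv (u (i+1)) x * u (i+2) x - u (i+1) x * deriv (u (i+2)) x) / (u (i+2) x)^2) x :=
      hw.div hz (hne (i+2) x)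
    have hf2 : HasDerivAt (fun y => u (i+1) y / u i y)
        ((deriv (u (i+1)) x * u i x - u (i+1) x * deriv (u i) x) / (u i x)^2) x :=
      hw.div hv (hne i x)
    have hR : HasDerivAt
        (fun y => (1 + u (i+1) y / u (i+2) y) * (1 + u (i+1) y / u i y))
        (((deriv (u (i+1)) x * u (i+2) x - u (i+1) x * deriv (u (i+2)) x) / (u (i+2) x)^2)
            * (1 + u (i+1) x / u i x)
          + (1 + u (i+1) x / u (i+2) x)
            * ((deriv (u (i+1)) x * u i x - u (i+1) x * deriv (u i) x) / (u i x)^2)) x :=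
      (hf1.const_add 1).mul (hf2.const_add 1)
    have hIe : I i = fun y => (1 + u (i+1) y / u (i+2) y) * (1 + u (i+1) y / u i y) :=
      funext (hI i)
    have h12 : i + 1 + 1 = i + 2 := by ring
    have hz' := heq (i+1) x
    rw [h12] at hz'
    rw [hIe, hR.deriv, hz', heq i x]
    have h1 := hne i x
    have h2 := hne (i+1) x
    have h3 := hne (i+2) x
    field_simp
    ring
end

section
/- Let z : ℤ → ℝ → ℝ be such that each z i is twice differentiable, and suppose: (z (i+1))'(x) = (z i)'(x) for all i ∈ ℤ and x ∈ ℝ; z i x ≠ 0, (z i)'(x) ≠ 0, and z (i+1) x ≠ z i x for all i, x. Define u i x = (z (i+1) x − z i x)·(z i)'(x) / (z (i+1) x · z i x). Then u satisfies the semi-discrete Liouville equation: for all i ∈ ℤ and x ∈ ℝ, (u (i+1))'(x) = u (i+1) x · ( u (i+1) x + (u i)'(x)/(u i x) + u i x ). -/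
lemma aux_deriv_17 (f g : ℝ → ℝ) (hf : Differentiable ℝ f) (hg : Differentiable ℝ g)
    (hf' : Differentiable ℝ (deriv f)) (hw : deriv g = deriv f)
    (hf0 : ∀ x, f x ≠ 0) (hg0 : ∀ x, g x ≠ 0) (x : ℝ) :
    deriv (fun x => (g x - f x) * deriv f x / (g x * f x)) x
      = (((deriv f x - deriv f x) * deriv f x + (g x - f x) * deriv (deriv f) x)
            * (g x * f x)
          - (g x - f x) * deriv f x * (deriv f x * f x + g x * deriv f x))
        / (g x * f x) ^ 2 := by
  have hg' : HasDerivAt g (deriv f x) x := hw ▸ (hg x).hasDerivAt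
  have hnum : HasDerivAt (fun x => (g x - f x) * deriv f x)
      ((deriv f x - deriv f x) * deriv f x + (g x - f x) * deriv (deriv f) x) x :=
    (hg'.sub (hf x).hasDerivAt).mul (hf' x).hasDerivAt
  have hden : HasDerivAt (fun x => g x * f x)
      (deriv f x * f x + g x * deriv f x) x :=
    hg'.mul (hf x).hasDerivAt
  exact (hnum.div hden (mul_ne_zero (hg0 x) (hf0 x))).deriv

/-- The substitution u = (z₁ − z)·zₓ/(z₁·z) maps solutions of the semi-discrete
wave equation (z₁)ₓ = zₓ into solutions of the semi-discrete Liouville equation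
(u₁)ₓ = u₁(u₁ + uₓ/u + u). -/
theorem stmt_17 (z : ℤ → ℝ → ℝ)
    (hdiff : ∀ i : ℤ, Differentiable ℝ (z i))
    (hdiff2 : ∀ i : ℤ, Differentiable ℝ (deriv (z i)))
    (hwave : ∀ (i : ℤ) (x : ℝ), deriv (z (i + 1)) x = deriv (z i) x)
    (hne0 : ∀ (i : ℤ) (x : ℝ), z i x ≠ 0)
    (hnex : ∀ (i : ℤ) (x : ℝ), deriv (z i) x ≠ 0)
    (hne1 : ∀ (i : ℤ) (x : ℝ), z (i + 1) x ≠ z i x)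
    (u : ℤ → ℝ → ℝ)
    (hu : ∀ (i : ℤ) (x : ℝ),
      u i x = (z (i + 1) x - z i x) * deriv (z i) x / (z (i + 1) x * z i x)) :
    ∀ (i : ℤ) (x : ℝ),
      deriv (u (i + 1)) x
        = u (i + 1) x * (u (i + 1) x + deriv (u i) x / u i x + u i x) := by
  intro i x
  have hwf : ∀ j : ℤ, deriv (z (j + 1)) = deriv (z j) := fun j => funext (hwave j)
  have hui : ∀ j : ℤ, u j = fun x => (z (j + 1) x - z j x) * deriv (z j) x / (z (j + 1) x * z j x) :=
    fun j => funext (hu j)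
  have hd1 : deriv (u i) x
      = (((deriv (z i) x - deriv (z i) x) * deriv (z i) x
            + (z (i + 1) x - z i x) * deriv (deriv (z i)) x) * (z (i + 1) x * z i x)
          - (z (i + 1) x - z i x) * deriv (z i) x
              * (deriv (z i) x * z i x + z (i + 1) x * deriv (z i) x))
        / (z (i + 1) x * z i x) ^ 2 := by
    rw [hui i]
    exact aux_deriv_17 (z i) (z (i + 1)) (hdiff i) (hdiff (i + 1)) (hdiff2 i)
      (hwf i) (hne0 i) (hne0 (i + 1)) x
  have hd2 : deriv (u (i + 1)) x
      = (((deriv (z (i + 1)) x - deriv (z (i + 1)) x) * deriv (z (i + 1)) x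
            + (z (i + 1 + 1) x - z (i + 1) x) * deriv (deriv (z (i + 1))) x)
            * (z (i + 1 + 1) x * z (i + 1) x)
          - (z (i + 1 + 1) x - z (i + 1) x) * deriv (z (i + 1)) x
              * (deriv (z (i + 1)) x * z (i + 1) x + z (i + 1 + 1) x * deriv (z (i + 1)) x))
        / (z (i + 1 + 1) x * z (i + 1) x) ^ 2 := by
    rw [hui (i + 1)]
    exact aux_deriv_17 (z (i + 1)) (z (i + 1 + 1)) (hdiff (i + 1)) (hdiff (i + 1 + 1))
      (hdiff2 (i + 1)) (hwf (i + 1)) (hne0 (i + 1)) (hne0 (i + 1 + 1)) x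
  have hux : u i x ≠ 0 := by
    rw [hu i]
    exact div_ne_zero (mul_ne_zero (sub_ne_zero.mpr (hne1 i x)) (hnex i x))
      (mul_ne_zero (hne0 (i + 1) x) (hne0 i x))
  rw [hd2, hd1, hu (i + 1) x, hu i x, hwf i]
  have ha := hne0 i x
  have hb := hne0 (i + 1) x
  have hc := hne0 (i + 1 + 1) x
  have hw := hnex i x
  have hba : z (i + 1) x - z i x ≠ 0 := sub_ne_zero.mpr (hne1 i x)
  field_simp
  ring
end

section
/- Let u : ℤ → ℝ → ℝ be such that each u i is twice differentiable, u i x ≠ 0 for all i ∈ ℤ and x ∈ ℝ, and u satisfies the semi-discrete Liouville equation: for all i ∈ ℤ and x ∈ ℝ, (u (i+1))'(x) = u (i+1) x · ( u (i+1) x + (u i)'(x)/(u i x) + u i x ). Define v i x = ( (u i)'(x)/(u i x) − u i x )/2. Then for every i ∈ ℤ the function x ↦ v (i+1) x − v i x is differentiable and, for all x ∈ ℝ, (v (i+1) − v i)'(x) = (v (i+1) x)² − (v i x)². -/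
/-- The invertible transformation v = (uₓ/u − u)/2 maps solutions of the
semi-discrete Liouville equation (u₁)ₓ = u₁(u₁ + uₓ/u + u) into solutions of
the coupled Riccati equations (v₁ − v)ₓ = v₁² − v². -/
theorem stmt_18 (u : ℤ → ℝ → ℝ)
    (hdiff : ∀ i : ℤ, Differentiable ℝ (u i))
    (hdiff2 : ∀ i : ℤ, Differentiable ℝ (deriv (u i)))
    (hne : ∀ (i : ℤ) (x : ℝ), u i x ≠ 0)
    (heq : ∀ (i : ℤ) (x : ℝ),
      deriv (u (i + 1)) x
        = u (i + 1) x * (u (i + 1) x + deriv (u i) x / u i x + u i x))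
    (v : ℤ → ℝ → ℝ)
    (hv : ∀ (i : ℤ) (x : ℝ), v i x = (deriv (u i) x / u i x - u i x) / 2) :
    ∀ i : ℤ, Differentiable ℝ (fun x => v (i + 1) x - v i x) ∧
      ∀ x : ℝ, deriv (fun y => v (i + 1) y - v i y) x
        = (v (i + 1) x) ^ 2 - (v i x) ^ 2 := by
  intro i
  have hfun : (fun x => v (i + 1) x - v i x) = u i := by
    funext x
    rw [hv, hv, heq]
    have h := hne i x
    have h1 := hne (i + 1) x
    field_simp
    ring
  constructor
  · rw [hfun]; exact hdiff i
  · intro x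
    rw [hfun, hv, hv, heq]
    have h := hne i x
    have h1 := hne (i + 1) x
    field_simp
    ring
end

section
/- Let B, C ∈ ℝ and let u : ℤ → ℝ → ℝ be such that each u i is differentiable, C·exp(2·u (i+1) x) + B·exp(u (i+1) x + u i x) + C·exp(2·u i x) ≥ 0 for all i ∈ ℤ and x ∈ ℝ, and u satisfies: for all i, x, (u (i+1))'(x) = (u i)'(x) + √( C·exp(2·u (i+1) x) + B·exp(u (i+1) x + u i x) + C·exp(2·u i x) ). Define w i x = exp(u (i+1) x − u i x). Then C·(w i x)² + B·(w i x) + C ≥ 0 for all i, x, each w i is differentiable, and for all i ∈ ℤ and x ∈ ℝ, (w (i+1))'(x) · √( C·(w i x)² + B·(w i x) + C ) = w (i+1) x · (w i)'(x) · √( C·(w (i+1) x)² + B·(w (i+1) x) + C ). -/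
/-- The invertible transformation w = e^{u₁ − u} maps solutions of the
Habibullin–Zheltukhina equation (u₁)ₓ = uₓ + √(C e^{2u₁} + B e^{u₁+u} + C e^{2u})
into solutions of (w₁)ₓ·√(C w² + B w + C) = w₁·wₓ·√(C w₁² + B w₁ + C). -/
theorem stmt_19 (B C : ℝ) (u : ℤ → ℝ → ℝ)
    (hdiff : ∀ i : ℤ, Differentiable ℝ (u i))
    (hpos : ∀ (i : ℤ) (x : ℝ),
      0 ≤ C * Real.exp (2 * u (i + 1) x)
        + B * Real.exp (u (i + 1) x + u i x) + C * Real.exp (2 * u i x))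
    (heq : ∀ (i : ℤ) (x : ℝ),
      deriv (u (i + 1)) x
        = deriv (u i) x
          + Real.sqrt (C * Real.exp (2 * u (i + 1) x)
              + B * Real.exp (u (i + 1) x + u i x) + C * Real.exp (2 * u i x)))
    (w : ℤ → ℝ → ℝ)
    (hw : ∀ (i : ℤ) (x : ℝ), w i x = Real.exp (u (i + 1) x - u i x)) :
    (∀ (i : ℤ) (x : ℝ), 0 ≤ C * (w i x) ^ 2 + B * w i x + C)
      ∧ (∀ i : ℤ, Differentiable ℝ (w i))
      ∧ (∀ (i : ℤ) (x : ℝ),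
          deriv (w (i + 1)) x * Real.sqrt (C * (w i x) ^ 2 + B * w i x + C)
            = w (i + 1) x * deriv (w i) x
              * Real.sqrt (C * (w (i + 1) x) ^ 2 + B * w (i + 1) x + C)) := by
  set S : ℤ → ℝ → ℝ := fun i x => C * Real.exp (2 * u (i + 1) x)
        + B * Real.exp (u (i + 1) x + u i x) + C * Real.exp (2 * u i x) with hS
  -- key algebraic identity
  have key : ∀ (i : ℤ) (x : ℝ),
      C * (w i x) ^ 2 + B * w i x + C = S i x * Real.exp (-(2 * u i x)) := by
    intro i x
    rw [hw]
    have e1 : Real.exp (u (i+1) x - u i x) = Real.exp (u (i+1) x) / Real.exp (u i x) :=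
      Real.exp_sub _ _
    have e2 : Real.exp (2 * u (i+1) x) = Real.exp (u (i+1) x) ^ 2 := by
      rw [two_mul, Real.exp_add, sq]
    have e3 : Real.exp (2 * u i x) = Real.exp (u i x) ^ 2 := by
      rw [two_mul, Real.exp_add, sq]
    have e4 : Real.exp (u (i+1) x + u i x) = Real.exp (u (i+1) x) * Real.exp (u i x) :=
      Real.exp_add _ _
    have e5 : Real.exp (-(2 * u i x)) = (Real.exp (u i x) ^ 2)⁻¹ := by
      rw [Real.exp_neg, e3]
    have hne : Real.exp (u i x) ≠ 0 := Real.exp_ne_zero _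
    simp only [hS, e1, e2, e3, e4, e5]
    field_simp
  have hpos' : ∀ (i : ℤ) (x : ℝ), 0 ≤ C * (w i x) ^ 2 + B * w i x + C := by
    intro i x
    rw [key]
    exact mul_nonneg (hpos i x) (Real.exp_pos _).le
  have hfun : ∀ i : ℤ, w i = fun x => Real.exp (u (i + 1) x - u i x) := fun i =>
    funext (hw i)
  have hder : ∀ (i : ℤ) (x : ℝ), HasDerivAt (w i) (w i x * Real.sqrt (S i x)) x := by
    intro i x
    rw [hfun i]
    have h1 := ((hdiff (i+1) x).hasDerivAt.sub (hdiff i x).hasDerivAt).exp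
    have : deriv (u (i+1)) x - deriv (u i) x = Real.sqrt (S i x) := by
      rw [heq i x]; ring
    rw [this] at h1
    simpa [hw i x] using h1
  have hderiv : ∀ (i : ℤ) (x : ℝ), deriv (w i) x = w i x * Real.sqrt (S i x) :=
    fun i x => (hder i x).deriv
  refine ⟨hpos', fun i => fun x => (hder i x).differentiableAt, fun i x => ?_⟩
  have s1 : Real.sqrt (C * (w i x) ^ 2 + B * w i x + C)
      = Real.sqrt (S i x) * Real.exp (-(u i x)) := by
    rw [key]
    rw [show Real.exp (-(2 * u i x)) = Real.exp (-(u i x)) ^ 2 by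
      rw [← Real.exp_nat_mul]; ring_nf]
    rw [Real.sqrt_mul (hpos i x), Real.sqrt_sq (Real.exp_pos _).le]
  have s2 : Real.sqrt (C * (w (i+1) x) ^ 2 + B * w (i+1) x + C)
      = Real.sqrt (S (i+1) x) * Real.exp (-(u (i+1) x)) := by
    rw [key]
    rw [show Real.exp (-(2 * u (i+1) x)) = Real.exp (-(u (i+1) x)) ^ 2 by
      rw [← Real.exp_nat_mul]; ring_nf]
    rw [Real.sqrt_mul (hpos (i+1) x), Real.sqrt_sq (Real.exp_pos _).le]
  rw [hderiv, hderiv, s1, s2, hw i x, hw (i+1) x]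
  simp only [Real.exp_sub, Real.exp_neg]
  have h1 := Real.exp_ne_zero (u i x)
  have h2 := Real.exp_ne_zero (u (i+1) x)
  field_simp
end
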